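/- Let M > 0 and let f : E → ℝ be convex, M-Lipschitz, with nonempty minimizer set X* and minimum value f*. Let x_0 ∈ E and define iterates: for k ≥ 1, pick g_{k−1} ∈ ∂f(x_{k−1}), set γ_{k−1} = (f(x_{k−1}) − f*)/((k+1)·M²), and set x_k = x_{k−1} − γ_{k−1}·g_{k−1} + ((k−1)/(k+1))·(x_{k−1} − x_{k−2}) (the momentum term being absent for k = 1). Then for every n ∈ ℕ: f(x_n) − f* ≤ M·d(x_0, X*)/√(n+1). -/

import Mathlib

open scoped RealInnerProductSpace

theorem heavy_ball_lipschitz_guarantee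
    {E : Type*} [NormedAddCommGroup E] [InnerProductSpace ℝ E] [FiniteDimensional ℝ E]
    (M : ℝ) (hM : 0 < M)
    (f : E → ℝ) (hconv : ConvexOn ℝ Set.univ f)
    (hLip : ∀ a b : E, |f a - f b| ≤ M * ‖a - b‖)
    (Xstar : Set E) (hXstar : Xstar = {z | ∀ y, f z ≤ f y}) (hne : Xstar.Nonempty)
    (fstar : ℝ) (hfstar : ∀ z ∈ Xstar, f z = fstar)
    (x g : ℕ → E) (γ : ℕ → ℝ)
    (hsub : ∀ k, ∀ y, f y ≥ f (x k) + ⟪g k, y - x k⟫)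
    (hγ : ∀ k, γ k = (f (x k) - fstar) / (((k : ℝ) + 2) * M ^ 2))
    (hupd : ∀ k, 1 ≤ k →
      x k = x (k - 1) - γ (k - 1) • g (k - 1)
        + ((((k : ℝ) - 1) / ((k : ℝ) + 1)) • (x (k - 1) - x (k - 2)))) :
    ∀ n : ℕ,
      f (x n) - fstar ≤ M * Metric.infDist (x 0) Xstar / Real.sqrt ((n : ℝ) + 1) := by
  obtain ⟨z0, hz0⟩ := hne
  have hM2 : (0:ℝ) < M ^ 2 := by positivity
  have hMne : M ≠ 0 := ne_of_gt hM
  set Δ : ℕ → ℝ := fun k => f (x k) - fstar with hΔdef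
  have hΔ0 : ∀ k, 0 ≤ Δ k := by
    intro k
    have h1 : ∀ w, f z0 ≤ f w := by rw [hXstar] at hz0; exact hz0
    have h2 : f z0 = fstar := hfstar z0 hz0
    have := h1 (x k)
    simp only [hΔdef]
    linarith
  have hgM : ∀ k, ‖g k‖ ≤ M := by
    intro k
    have h1 := hsub k (x k + g k)
    have h2 : ⟪g k, (x k + g k) - x k⟫ = ‖g k‖ ^ 2 := by
      simp [real_inner_self_eq_norm_sq]
    have h3 := hLip (x k + g k) (x k)
    have h4 : ‖(x k + g k) - x k‖ = ‖g k‖ := by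
      congr 1; abel
    rw [h4] at h3
    have h5 : f (x k + g k) - f (x k) ≤ M * ‖g k‖ := (abs_le.mp h3).2
    have h6 : ‖g k‖ ^ 2 ≤ M * ‖g k‖ := by rw [← h2]; linarith [h1]
    rcases eq_or_lt_of_le (norm_nonneg (g k)) with h | h
    · rw [← h]; exact le_of_lt hM
    · nlinarith
  set y : ℕ → E := fun k => ((k:ℝ) + 1) • x k - (k:ℝ) • x (k - 1) with hydef
  have hy0 : y 0 = x 0 := by simp [hydef]
  have hrec : ∀ k, y (k + 1) = y k - (Δ k / M ^ 2) • g k := by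
    intro k
    have h := hupd (k + 1) (by omega)
    have h1 : k + 1 - 1 = k := rfl
    have h2 : k + 1 - 2 = k - 1 := by omega
    rw [h1, h2, hγ k] at h
    have hk2 : ((k:ℝ) + 2) ≠ 0 := by positivity
    simp only [hydef, hΔdef, h1]
    rw [h]
    push_cast
    match_scalars <;> field_simp <;> ring
  have key : ∀ z ∈ Xstar, ∀ n : ℕ,
      ‖y n - z‖ ^ 2 + ((n:ℝ) / M ^ 2) * (Δ (n - 1)) ^ 2 ≤ ‖x 0 - z‖ ^ 2 := by
    intro z hz n
    have hfz : f z = fstar := hfstar z hz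
    induction n with
    | zero => simp [hy0]
    | succ n ih =>
      -- inner product bounds
      have hb1 : Δ n ≤ ⟪g n, x n - z⟫ := by
        have h1 := hsub n z
        have h2 : ⟪g n, z - x n⟫ = -⟪g n, x n - z⟫ := by
          rw [← inner_neg_right]; congr 1; abel
        rw [h2] at h1
        simp only [hΔdef]
        linarith [h1, hfz.symm ▸ h1]
      have hb2 : Δ n - Δ (n - 1) ≤ ⟪g n, x n - x (n - 1)⟫ := by
        have h1 := hsub n (x (n - 1))
        have h2 : ⟪g n, x (n - 1) - x n⟫ = -⟪g n, x n - x (n - 1)⟫ := by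
          rw [← inner_neg_right]; congr 1; abel
        rw [h2] at h1
        simp only [hΔdef]
        linarith
      have hyd : y n - z = (x n - z) + (n:ℝ) • (x n - x (n - 1)) := by
        simp only [hydef]; module
      have hinner : ((n:ℝ) + 1) * Δ n - (n:ℝ) * Δ (n - 1) ≤ ⟪g n, y n - z⟫ := by
        rw [hyd, inner_add_right, real_inner_smul_right]
        have hn : (0:ℝ) ≤ (n:ℝ) := Nat.cast_nonneg n
        nlinarith [mul_le_mul_of_nonneg_left hb2 hn]
      have hexp : ‖y (n + 1) - z‖ ^ 2
          = ‖y n - z‖ ^ 2 - 2 * (Δ n / M ^ 2) * ⟪g n, y n - z⟫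
            + (Δ n / M ^ 2) ^ 2 * ‖g n‖ ^ 2 := by
        rw [hrec n]
        have h3 : y n - (Δ n / M ^ 2) • g n - z = (y n - z) - (Δ n / M ^ 2) • g n := by
          abel
        rw [h3, norm_sub_sq_real, real_inner_smul_right, real_inner_comm, norm_smul,
          mul_pow, Real.norm_eq_abs, sq_abs]
        ring
      have e2 : (Δ n / M ^ 2) ^ 2 * ‖g n‖ ^ 2 ≤ Δ n ^ 2 / M ^ 2 := by
        have h1 : (Δ n / M ^ 2) ^ 2 * ‖g n‖ ^ 2 ≤ (Δ n / M ^ 2) ^ 2 * M ^ 2 := by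
          apply mul_le_mul_of_nonneg_left _ (sq_nonneg _)
          have := hgM n
          nlinarith [norm_nonneg (g n)]
        have h2 : (Δ n / M ^ 2) ^ 2 * M ^ 2 = Δ n ^ 2 / M ^ 2 := by
          field_simp
        linarith
      have e4 : 2 * (Δ n / M ^ 2) * (((n:ℝ) + 1) * Δ n - (n:ℝ) * Δ (n - 1))
          ≤ 2 * (Δ n / M ^ 2) * ⟪g n, y n - z⟫ := by
        apply mul_le_mul_of_nonneg_left hinner
        exact mul_nonneg (by norm_num) (div_nonneg (hΔ0 n) (le_of_lt hM2))
      have e5 : -(2 * (Δ n / M ^ 2) * (((n:ℝ) + 1) * Δ n - (n:ℝ) * Δ (n - 1)))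
            + Δ n ^ 2 / M ^ 2 + (((n:ℝ) + 1) / M ^ 2) * Δ n ^ 2
            - ((n:ℝ) / M ^ 2) * Δ (n - 1) ^ 2
          = -(((n:ℝ) / M ^ 2) * (Δ n - Δ (n - 1)) ^ 2) := by
        field_simp; ring
      have e6 : 0 ≤ ((n:ℝ) / M ^ 2) * (Δ n - Δ (n - 1)) ^ 2 := by positivity
      have hcast : ((n + 1 : ℕ) : ℝ) = (n : ℝ) + 1 := by push_cast; ring
      have hidx : n + 1 - 1 = n := rfl
      rw [hidx, hcast]
      linarith [hexp, e2, e4, ih, e5, e6]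
  intro n
  have hs : (0:ℝ) < Real.sqrt ((n:ℝ) + 1) := Real.sqrt_pos.2 (by positivity)
  rw [le_div_iff₀ hs]
  have hs2 : (Real.sqrt ((n:ℝ) + 1)) ^ 2 = (n:ℝ) + 1 := Real.sq_sqrt (by positivity)
  have h1 : ∀ z ∈ Xstar, Δ n * Real.sqrt ((n:ℝ) + 1) / M ≤ dist (x 0) z := by
    intro z hz
    have h := key z hz (n + 1)
    have hidx : n + 1 - 1 = n := rfl
    have hcast : ((n + 1 : ℕ) : ℝ) = (n : ℝ) + 1 := by push_cast; ring
    rw [hidx, hcast] at h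
    have hA : (((n:ℝ) + 1) / M ^ 2) * Δ n ^ 2 ≤ ‖x 0 - z‖ ^ 2 := by
      nlinarith [sq_nonneg ‖y (n + 1) - z‖]
    have hA' : ((n:ℝ) + 1) * Δ n ^ 2 ≤ ‖x 0 - z‖ ^ 2 * M ^ 2 := by
      rw [div_mul_eq_mul_div, div_le_iff₀ hM2] at hA
      linarith
    rw [dist_eq_norm, div_le_iff₀ hM]
    have hB : Δ n ^ 2 * ((n:ℝ) + 1) ≤ (M * ‖x 0 - z‖) ^ 2 := by
      calc Δ n ^ 2 * ((n:ℝ) + 1) = ((n:ℝ) + 1) * Δ n ^ 2 := by ring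
        _ ≤ ‖x 0 - z‖ ^ 2 * M ^ 2 := hA'
        _ = (M * ‖x 0 - z‖) ^ 2 := by ring
    calc Δ n * Real.sqrt ((n:ℝ) + 1) = Real.sqrt (Δ n ^ 2 * ((n:ℝ) + 1)) := by
          rw [Real.sqrt_mul (sq_nonneg _), Real.sqrt_sq (hΔ0 n)]
      _ ≤ Real.sqrt ((M * ‖x 0 - z‖) ^ 2) := Real.sqrt_le_sqrt hB
      _ = M * ‖x 0 - z‖ := Real.sqrt_sq (by positivity)
      _ = ‖x 0 - z‖ * M := by ring
  have h2 : Δ n * Real.sqrt ((n:ℝ) + 1) / M ≤ Metric.infDist (x 0) Xstar := by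
    by_contra hcon
    push_neg at hcon
    obtain ⟨w, hw, hwlt⟩ := (Metric.infDist_lt_iff ⟨z0, hz0⟩).mp hcon
    exact absurd hwlt (not_lt.mpr (h1 w hw))
  have h3 : Δ n * Real.sqrt ((n:ℝ) + 1) ≤ M * Metric.infDist (x 0) Xstar := by
    rw [div_le_iff₀ hM] at h2
    linarith
  simpa [hΔdef] using h3
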